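/- Fix d, H, n ≥ 2, word embeddings e(−1), e(+1) ∈ ℝ^d, positional encodings p_1,…,p_n ∈ ℝ^d, and for each h = 1,…,H matrices K_h, Q_h ∈ ℝ^{d×d}. For x ∈ {−1,1}^n define first-layer logits a_{i,j}^(h)(x) = (K_h·(p_j + e(x_j)))ᵀ·Q_h·(p_i + e(x_i)) and attention weights â_{i,j}^(h)(x) = exp(a_{i,j}^(h)(x)) / Σ_{s=1}^n exp(a_{i,s}^(h)(x)). Then for every δ > 0, with probability at least 1 − H/n^{δ−2} over a uniformly random x ∈ {−1,1}^n, the following holds simultaneously for every i ∈ {1,…,n} and h ∈ {1,…,H}: Σ_{q=1}^n Σ_{j=1}^n |â_{i,j}^(h)(x) − â_{i,j}^(h)(x^{⊕q})| ≤ (8 + 32δ)·log n + 10. Notably, this bound does not depend on the norms of K_h and Q_h. -/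

import Mathlib

open scoped BigOperators
open Matrix

noncomputable section

namespace SensTF

/-- Flip the `q`-th bit of `x`. -/
def flip {n : ℕ} (x : Fin n → Bool) (q : Fin n) : Fin n → Bool :=
  Function.update x q (!(x q))

/-- Euclidean norm of a vector in `ℝ^d`. -/
def enorm {d : ℕ} (v : Fin d → ℝ) : ℝ := Real.sqrt (∑ j : Fin d, (v j) ^ 2)

/-- Spectral norm (ℓ²-operator norm) of a `d × d` matrix. -/
def specNorm {d : ℕ} (M : Matrix (Fin d) (Fin d) ℝ) : ℝ :=
  ‖Matrix.toEuclideanCLM (𝕜 := ℝ) M‖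

/-- Attention logit `a_{i,u} = (K y_u)ᵀ Q y_i`. -/
def attLogit {d n : ℕ} (K Q : Matrix (Fin d) (Fin d) ℝ)
    (yp : Fin n → Fin d → ℝ) (i u : Fin n) : ℝ :=
  dotProduct (K.mulVec (yp u)) (Q.mulVec (yp i))

/-- Attention weight (softmax of the logits). -/
def attWeight {d n : ℕ} (K Q : Matrix (Fin d) (Fin d) ℝ)
    (yp : Fin n → Fin d → ℝ) (i u : Fin n) : ℝ :=
  Real.exp (attLogit K Q yp i u) / ∑ s : Fin n, Real.exp (attLogit K Q yp i s)

end SensTF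

open SensTF

namespace SensAux
open Finset



lemma softmax_l1 {n : ℕ} (w w' : Fin n → ℝ) (hw : ∀ s, 0 < w s) (hw' : ∀ s, 0 < w' s)
    (q : Fin n) (hag : ∀ s, s ≠ q → w' s = w s) :
    ∑ j, |w j / (∑ s, w s) - w' j / (∑ s, w' s)| ≤
      2 * (w q / (∑ s, w s) + w' q / (∑ s, w' s)) := by
  have hq : q ∈ (univ : Finset (Fin n)) := mem_univ q
  set S := ∑ s, w s with hS
  set S' := ∑ s, w' s with hS'
  have hSpos : 0 < S := Finset.sum_pos (fun s _ => hw s) ⟨q, hq⟩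
  have hS'pos : 0 < S' := Finset.sum_pos (fun s _ => hw' s) ⟨q, hq⟩
  set A := ∑ j ∈ univ.erase q, w j with hA
  have hSA : A + w q = S := Finset.sum_erase_add _ _ hq
  have hS'A : A + w' q = S' := by
    have : ∑ j ∈ univ.erase q, w' j = A := by
      apply Finset.sum_congr rfl
      intro s hs
      exact hag s (Finset.ne_of_mem_erase hs)
    rw [← this]
    exact Finset.sum_erase_add _ _ hq
  have hAnn : 0 ≤ A := Finset.sum_nonneg fun s _ => (hw s).le
  -- split the sum
  rw [← Finset.sum_erase_add _ _ hq]
  have herase : ∑ j ∈ univ.erase q, |w j / S - w' j / S'| = |w q / S - w' q / S'| := by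
    have h1 : ∀ j ∈ univ.erase q, |w j / S - w' j / S'| = w j * |1 / S - 1 / S'| := by
      intro j hj
      rw [hag j (Finset.ne_of_mem_erase hj)]
      rw [show w j / S - w j / S' = w j * (1 / S - 1 / S') by ring]
      rw [abs_mul, abs_of_pos (hw j)]
    rw [Finset.sum_congr rfl h1, ← Finset.sum_mul]
    rw [← hA, ← abs_of_nonneg hAnn, ← abs_mul]
    have : A * (1 / S - 1 / S') = w' q / S' - w q / S := by
      field_simp
      rw [← hSA, ← hS'A]; ring
    rw [this, abs_sub_comm]
  rw [herase]
  have habs : |w q / S - w' q / S'| ≤ w q / S + w' q / S' := by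
    have := abs_sub (w q / S) (w' q / S')
    calc |w q / S - w' q / S'| ≤ |w q / S| + |w' q / S'| := abs_sub _ _
    _ = w q / S + w' q / S' := by
        rw [abs_of_pos (div_pos (hw q) hSpos), abs_of_pos (div_pos (hw' q) hS'pos)]
  linarith




lemma harm (m : ℕ) : ∑ k ∈ Finset.Icc 1 m, ((k : ℝ))⁻¹ ≤ 1 + Real.log m := by
  induction m with
  | zero => simp
  | succ m ih =>
    rcases Nat.eq_zero_or_pos m with hm | hm
    · subst hm; norm_num
    rw [Finset.sum_Icc_succ_top (by omega)]
    have hlog : Real.log m + ((m : ℝ) + 1)⁻¹ ≤ Real.log (m + 1) := by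
      have hm0 : (0 : ℝ) < m := by exact_mod_cast hm
      have h1 : Real.log ((m : ℝ) / (m + 1)) ≤ (m : ℝ) / (m + 1) - 1 :=
        Real.log_le_sub_one_of_pos (by positivity)
      have h2 : Real.log ((m : ℝ) / (m + 1)) = Real.log m - Real.log (m + 1) :=
        Real.log_div (by positivity) (by positivity)
      have h3 : (m : ℝ) / (m + 1) - 1 = -(((m : ℝ) + 1)⁻¹) := by
        field_simp
        ring
      rw [h2, h3] at h1
      linarith
    push_cast
    push_cast at ih
    linarith

lemma phi_sum (n t₀ : ℕ) (ht : 1 ≤ t₀) :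
    ∑ k ∈ Finset.range n, (if k < t₀ then (1 : ℝ) else 8 / k) ≤ t₀ + 8 * (1 + Real.log n) := by
  classical
  rw [Finset.sum_ite]
  have h1 : ∑ _k ∈ (Finset.range n).filter (fun k => k < t₀), (1 : ℝ) ≤ t₀ := by
    rw [Finset.sum_const, nsmul_eq_mul, mul_one]
    have : (Finset.range n).filter (fun k => k < t₀) ⊆ Finset.range t₀ := by
      intro k hk
      simp only [Finset.mem_filter, Finset.mem_range] at *
      exact hk.2
    exact_mod_cast Nat.cast_le.mpr (le_trans (Finset.card_le_card this) (by simp))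
  have h2 : ∑ k ∈ (Finset.range n).filter (fun k => ¬ k < t₀), (8 : ℝ) / k ≤ 8 * (1 + Real.log n) := by
    · have hsub : (Finset.range n).filter (fun k => ¬ k < t₀) ⊆ Finset.Icc 1 n := by
        intro k hk
        simp only [Finset.mem_filter, Finset.mem_range, Finset.mem_Icc] at *
        omega
      have h3 : ∑ k ∈ (Finset.range n).filter (fun k => ¬ k < t₀), (8 : ℝ) / k ≤ ∑ k ∈ Finset.Icc 1 n, (8 : ℝ) / k :=
        Finset.sum_le_sum_of_subset_of_nonneg hsub (fun k _ _ => by positivity)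
      have h4 : ∑ k ∈ Finset.Icc 1 n, (8 : ℝ) / k = 8 * ∑ k ∈ Finset.Icc 1 n, ((k : ℝ))⁻¹ := by
        rw [Finset.mul_sum]
        exact Finset.sum_congr rfl fun k _ => by rw [div_eq_mul_inv]
      calc ∑ k ∈ (Finset.range n).filter (fun k => ¬ k < t₀), (8 : ℝ) / k
          ≤ 8 * ∑ k ∈ Finset.Icc 1 n, ((k : ℝ))⁻¹ := by rw [← h4]; exact h3
        _ ≤ 8 * (1 + Real.log n) := by
            have := harm n
            nlinarith [harm n]
  linarith

lemma geom_tail (t₀ m : ℕ) :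
    ∑ k ∈ Finset.Ico t₀ m, Real.exp (-(k : ℝ) / 4) ≤ 5 * Real.exp (-(t₀ : ℝ) / 4) := by
  have hr : ∀ k : ℕ, Real.exp (-(k : ℝ) / 4) = (Real.exp (-(1:ℝ)/4)) ^ k := by
    intro k
    rw [← Real.exp_nat_mul]
    ring_nf
  set r := Real.exp (-(1:ℝ)/4) with hrdef
  have hr0 : 0 < r := Real.exp_pos _
  have hr1 : r < 1 := by
    rw [hrdef]
    apply Real.exp_lt_one_iff.mpr
    norm_num
  calc ∑ k ∈ Finset.Ico t₀ m, Real.exp (-(k : ℝ) / 4)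
      = ∑ k ∈ Finset.Ico t₀ m, r ^ k := Finset.sum_congr rfl fun k _ => hr k
    _ ≤ r ^ t₀ / (1 - r) := geom_sum_Ico_le_of_lt_one hr0.le hr1
    _ ≤ 5 * Real.exp (-(t₀ : ℝ) / 4) := by
        rw [hr t₀] at *
        rw [div_le_iff₀ (by linarith)]
        have h54 : (5:ℝ)/4 ≤ Real.exp ((1:ℝ)/4) := by
          have := Real.add_one_le_exp ((1:ℝ)/4)
          linarith
        have hre : r = (Real.exp ((1:ℝ)/4))⁻¹ := by
          rw [hrdef, ← Real.exp_neg]; norm_num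
        have : r ≤ 4/5 := by
          rw [hre]
          rw [inv_le_comm₀ (Real.exp_pos _) (by norm_num)]
          · linarith
        nlinarith [pow_nonneg hr0.le t₀]
  



noncomputable section
open Classical

lemma base_le_two : (8:ℝ) ^ ((1:ℝ)/8) * (9/8) * Real.exp ((1:ℝ)/4) ≤ 2 := by
  have hbase : (0:ℝ) ≤ (8:ℝ) ^ ((1:ℝ)/8) * (9/8) * Real.exp ((1:ℝ)/4) := by positivity
  rw [← pow_le_pow_iff_left₀ hbase (by norm_num : (0:ℝ) ≤ 2) (by norm_num : 8 ≠ 0)]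
  have e1 : ((8:ℝ) ^ ((1:ℝ)/8)) ^ (8:ℕ) = 8 := by
    rw [← Real.rpow_natCast ((8:ℝ) ^ ((1:ℝ)/8)) 8, ← Real.rpow_mul (by norm_num : (0:ℝ) ≤ 8)]
    norm_num
  have e2 : (Real.exp ((1:ℝ)/4)) ^ (8:ℕ) = (Real.exp 1) ^ (2:ℕ) := by
    rw [← Real.exp_nat_mul, ← Real.exp_nat_mul]
    norm_num
  rw [mul_pow, mul_pow, e1, e2]
  have he : Real.exp 1 < 2.7182818286 := Real.exp_one_lt_d9
  have he0 : (0:ℝ) < Real.exp 1 := Real.exp_pos 1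
  nlinarith [sq_nonneg (Real.exp 1)]

lemma chernoff_pow (k : ℕ) :
    (8:ℝ) ^ ((k:ℝ)/8) * (9/8) ^ k * Real.exp ((k:ℝ)/4) ≤ 2 ^ k := by
  have h1 : (8:ℝ) ^ ((k:ℝ)/8) = ((8:ℝ) ^ ((1:ℝ)/8)) ^ k := by
    rw [← Real.rpow_natCast ((8:ℝ) ^ ((1:ℝ)/8)) k, ← Real.rpow_mul (by norm_num : (0:ℝ) ≤ 8)]
    ring_nf
  have h2 : Real.exp ((k:ℝ)/4) = (Real.exp ((1:ℝ)/4)) ^ k := by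
    rw [← Real.exp_nat_mul]
    ring_nf
  rw [h1, h2, ← mul_pow, ← mul_pow]
  exact pow_le_pow_left₀ (by positivity) base_le_two k

lemma chernoff_count {n : ℕ} (P : Finset (Fin n)) (β : Fin n → Bool) :
    (((univ : Finset (Fin n → Bool)).filter
        (fun x => 8 * ((P.filter (fun s => x s = β s)).card) < P.card)).card : ℝ)
      ≤ Real.exp (-(P.card : ℝ)/4) * 2 ^ n := by
  set k := P.card with hk
  have hkn : k ≤ n := by
    calc k ≤ (univ : Finset (Fin n)).card := Finset.card_le_card (Finset.subset_univ P)
    _ = n := by simp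
  set F : Fin n → Bool → ℝ := fun s c => if s ∈ P then (if c = β s then (8:ℝ)⁻¹ else 1) else 1 with hF
  set W : (Fin n → Bool) → ℝ := fun x => ∏ s, F s (x s) with hW
  have hWval : ∀ x, W x = (8:ℝ)⁻¹ ^ ((P.filter (fun s => x s = β s)).card) := by
    intro x
    rw [hW]
    dsimp only
    calc ∏ s, F s (x s) = ∏ s ∈ univ ∩ P, (if x s = β s then (8:ℝ)⁻¹ else 1) := by
          rw [← Finset.prod_ite_mem]
      _ = ∏ s ∈ P, (if x s = β s then (8:ℝ)⁻¹ else 1) := by rw [Finset.univ_inter]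
      _ = (8:ℝ)⁻¹ ^ ((P.filter (fun s => x s = β s)).card) := by
          rw [Finset.prod_ite, Finset.prod_const, Finset.prod_const_one, mul_one]
  have hWnn : ∀ x, 0 ≤ W x := fun x => by rw [hWval]; positivity
  have hsumW : ∑ x : Fin n → Bool, W x = (9/8:ℝ) ^ k * 2 ^ (n - k) := by
    have swap : ∏ s : Fin n, (∑ c : Bool, F s c)
        = ∑ x ∈ Fintype.piFinset (fun _ : Fin n => (univ : Finset Bool)), ∏ s, F s (x s) :=
      Finset.prod_univ_sum _ _
    rw [Fintype.piFinset_univ] at swap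
    have hsc : ∀ s, (∑ c : Bool, F s c) = if s ∈ P then (9/8:ℝ) else 2 := by
      intro s
      rw [Fintype.sum_bool, hF]
      dsimp only
      by_cases hs : s ∈ P
      · cases hb : β s <;> simp [hs, hb] <;> norm_num
      · simp [hs]; norm_num
    have hprod : ∏ s : Fin n, (∑ c : Bool, F s c) = (9/8:ℝ) ^ k * 2 ^ (n - k) := by
      rw [Finset.prod_congr rfl (fun s _ => hsc s), Finset.prod_ite, Finset.prod_const,
        Finset.prod_const]
      have hc1 : ((univ : Finset (Fin n)).filter (fun s => s ∈ P)).card = k := by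
        rw [Finset.filter_univ_mem]
      have hc2 : ((univ : Finset (Fin n)).filter (fun s => ¬ s ∈ P)).card = n - k := by
        have h := Finset.card_filter_add_card_filter_not
          (s := (univ : Finset (Fin n))) (p := fun s => s ∈ P)
        rw [hc1] at h
        simp only [Finset.card_univ, Fintype.card_fin] at h
        omega
      rw [hc1, hc2]
    rw [← hprod, swap]
  set Bad := (univ : Finset (Fin n → Bool)).filter
      (fun x => 8 * ((P.filter (fun s => x s = β s)).card) < P.card) with hBad
  have hper : ∀ x ∈ Bad, (1:ℝ) ≤ (8:ℝ) ^ ((k:ℝ)/8) * W x := by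
    intro x hx
    rcases Finset.mem_filter.mp hx with ⟨-, hxc⟩
    set c := (P.filter (fun s => x s = β s)).card with hc
    have hck : (c:ℝ) ≤ (k:ℝ)/8 := by
      have h1 : 8 * c + 1 ≤ k := hxc
      have : (8:ℝ) * c + 1 ≤ k := by exact_mod_cast h1
      linarith
    have h1 : ((8:ℝ))^(c:ℕ) ≤ (8:ℝ)^((k:ℝ)/8) := by
      rw [← Real.rpow_natCast (8:ℝ) c]
      exact Real.rpow_le_rpow_of_exponent_le (by norm_num) hck
    rw [hWval x, ← hc, inv_pow]
    calc (1:ℝ) = (8:ℝ)^(c:ℕ) * ((8:ℝ)^(c:ℕ))⁻¹ := by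
          rw [mul_inv_cancel₀ (by positivity)]
      _ ≤ (8:ℝ)^((k:ℝ)/8) * ((8:ℝ)^(c:ℕ))⁻¹ := by
          apply mul_le_mul_of_nonneg_right h1 (by positivity)
  have hexp : (0:ℝ) < Real.exp ((k:ℝ)/4) := Real.exp_pos _
  calc (Bad.card : ℝ) = ∑ _x ∈ Bad, (1:ℝ) := Finset.cast_card Bad
    _ ≤ ∑ x ∈ Bad, (8:ℝ) ^ ((k:ℝ)/8) * W x := Finset.sum_le_sum hper
    _ ≤ ∑ x : Fin n → Bool, (8:ℝ) ^ ((k:ℝ)/8) * W x := by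
        apply Finset.sum_le_sum_of_subset_of_nonneg (Finset.subset_univ _)
        intro x _ _
        have := hWnn x
        positivity
    _ = (8:ℝ) ^ ((k:ℝ)/8) * ((9/8:ℝ) ^ k * 2 ^ (n - k)) := by
        rw [← Finset.mul_sum, hsumW]
    _ = ((8:ℝ) ^ ((k:ℝ)/8) * (9/8:ℝ) ^ k * Real.exp ((k:ℝ)/4)) * (Real.exp ((k:ℝ)/4))⁻¹
          * 2 ^ (n - k) := by
        field_simp
    _ ≤ (2:ℝ) ^ k * (Real.exp ((k:ℝ)/4))⁻¹ * 2 ^ (n - k) := by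
        apply mul_le_mul_of_nonneg_right _ (by positivity)
        apply mul_le_mul_of_nonneg_right (chernoff_pow k) (by positivity)
    _ = Real.exp (-(k : ℝ)/4) * 2 ^ n := by
        rw [neg_div, Real.exp_neg]
        rw [mul_comm ((2:ℝ)^k) _, mul_assoc, pow_mul_pow_sub (2:ℝ) hkn]
  
end



noncomputable section
open Classical

variable {n : ℕ} (g : Fin n → Bool → ℝ) (i : Fin n)

/-- max of the two possible weights at position s -/
def mm (s : Fin n) : ℝ := max (g s true) (g s false)

/-- the argmax direction -/
def bb (s : Fin n) : Bool := g s false ≤ g s true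

/-- positions (other than i) strictly "before" q in decreasing-mm order -/
def Pq (q : Fin n) : Finset (Fin n) :=
  (univ.erase i).filter (fun s => mm g q < mm g s ∨ (mm g s = mm g q ∧ s < q))

def nu (q : Fin n) : ℕ := (Pq g i q).card

def cc (x : Fin n → Bool) (q : Fin n) : ℕ :=
  ((Pq g i q).filter (fun s => x s = bb g s)).card

def Good (t₀ : ℕ) (x : Fin n → Bool) : Prop :=
  ∀ q ∈ univ.erase i, nu g i q ≤ 8 * cc g i x q ∨ nu g i q < t₀

lemma g_le_mm (s : Fin n) (c : Bool) : g s c ≤ mm g s := by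
  cases c
  · exact le_max_right _ _
  · exact le_max_left _ _

lemma g_bb_eq_mm (s : Fin n) : g s (bb g s) = mm g s := by
  unfold bb mm
  rcases le_total (g s false) (g s true) with h | h
  · simp [h, max_eq_left h]
  · by_cases h' : g s false ≤ g s true
    · simp [h', max_eq_left h']
    · simp [h', max_eq_right h]

lemma not_mem_Pq_self (q : Fin n) : q ∉ Pq g i q := by
  intro hq
  rcases (Finset.mem_filter.mp hq).2 with h | ⟨_, h⟩
  · exact lt_irrefl _ h
  · exact lt_irrefl _ h

lemma mm_le_of_mem_Pq {s q : Fin n} (hs : s ∈ Pq g i q) : mm g q ≤ mm g s := by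
  rcases (Finset.mem_filter.mp hs).2 with h | ⟨h, _⟩
  · exact h.le
  · exact h.ge

lemma nu_lt (q : Fin n) (hn : 1 ≤ n) : nu g i q < n := by
  have h1 : Pq g i q ⊆ univ.erase i := Finset.filter_subset _ _
  have := Finset.card_le_card h1
  have h2 : (univ.erase i).card < n := by
    rw [Finset.card_erase_of_mem (mem_univ i), Finset.card_univ, Fintype.card_fin]
    omega
  exact lt_of_le_of_lt this h2

lemma nu_strictMono {q q' : Fin n} (hq : q ∈ univ.erase i) (hbefore : mm g q' < mm g q ∨ (mm g q = mm g q' ∧ q < q')) :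
    nu g i q < nu g i q' := by
  apply Finset.card_lt_card
  rw [Finset.ssubset_iff_of_subset]
  · exact ⟨q, by
      refine Finset.mem_filter.mpr ⟨hq, ?_⟩
      · rcases hbefore with h | ⟨h, h'⟩
        · exact Or.inl h
        · exact Or.inr ⟨h, h'⟩,
      not_mem_Pq_self g i q⟩
  · -- Pq q ⊆ Pq q'
    intro s hs
    rcases Finset.mem_filter.mp hs with ⟨hsi, hord⟩
    refine Finset.mem_filter.mpr ⟨hsi, ?_⟩
    rcases hbefore with h | ⟨h, h'⟩ <;> rcases hord with h2 | ⟨h2, h3⟩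
    · exact Or.inl (lt_trans h h2)
    · exact Or.inl (h2 ▸ h)
    · exact Or.inl (h ▸ h2)
    · exact Or.inr ⟨h2.trans h, h3.trans h'⟩

lemma nu_injOn {q q' : Fin n} (hq : q ∈ univ.erase i) (hq' : q' ∈ univ.erase i)
    (h : nu g i q = nu g i q') : q = q' := by
  by_contra hne
  rcases lt_trichotomy (mm g q) (mm g q') with hlt | heq | hgt
  · exact absurd h (Nat.ne_of_lt (nu_strictMono g i (q := q') (q' := q) hq' (Or.inl hlt))).symm
  · rcases lt_or_gt_of_ne hne with hlt | hgt
    · exact absurd h (Nat.ne_of_lt (nu_strictMono g i hq (Or.inr ⟨heq, hlt⟩)))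
    · exact absurd h (Nat.ne_of_lt (nu_strictMono g i (q := q') (q' := q) hq' (Or.inr ⟨heq.symm, hgt⟩))).symm
  · exact absurd h (Nat.ne_of_lt (nu_strictMono g i hq (Or.inl hgt)))

end

noncomputable section
open Classical

lemma Tbound {n : ℕ} (g : Fin n → Bool → ℝ) (i : Fin n) (hpos : ∀ s c, 0 < g s c)
    (x : Fin n → Bool) (t₀ : ℕ) (ht : 1 ≤ t₀) (hx : Good g i t₀ x) :
    ∑ q ∈ univ.erase i, g q (!(x q)) / (∑ s, g s (Function.update x q (!(x q)) s))
      ≤ t₀ + 8 * (1 + Real.log n) := by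
  have hn1 : 1 ≤ n := i.pos
  have hterm : ∀ q ∈ univ.erase i,
      g q (!(x q)) / (∑ s, g s (Function.update x q (!(x q)) s))
        ≤ (if nu g i q < t₀ then (1:ℝ) else 8 / (nu g i q)) := by
    intro q hq
    set y := Function.update x q (!(x q)) with hy
    have hyq : y q = !(x q) := Function.update_self q _ x
    have hdpos : 0 < ∑ s, g s (y s) :=
      Finset.sum_pos (fun s _ => hpos s (y s)) ⟨q, mem_univ q⟩
    by_cases hcase : nu g i q < t₀
    · rw [if_pos hcase]
      rw [div_le_one hdpos]
      calc g q (!(x q)) = g q (y q) := by rw [hyq]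
        _ ≤ ∑ s, g s (y s) := Finset.single_le_sum (fun s _ => (hpos s (y s)).le) (mem_univ q)
    · rw [if_neg hcase]
      have h8c : nu g i q ≤ 8 * cc g i x q := by
        rcases hx q hq with h | h
        · exact h
        · exact absurd h hcase
      have hnut : t₀ ≤ nu g i q := Nat.le_of_not_lt hcase
      have hc1 : 1 ≤ cc g i x q := by omega
      set S := (Pq g i q).filter (fun s => x s = bb g s) with hS
      set a := g q (!(x q)) with ha
      have hapos : 0 < a := hpos q _
      have hSsum : (cc g i x q : ℝ) * a ≤ ∑ s, g s (y s) := by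
        have h1 : ∀ s ∈ S, a ≤ g s (y s) := by
          intro s hs
          have hsP : s ∈ Pq g i q := Finset.mem_filter.mp hs |>.1
          have hsb : x s = bb g s := (Finset.mem_filter.mp hs).2
          have hsq : s ≠ q := by
            intro h
            exact not_mem_Pq_self g i q (h ▸ hsP)
          have hys : y s = x s := Function.update_of_ne hsq _ x
          rw [hys, hsb, g_bb_eq_mm g s]
          calc a ≤ mm g q := g_le_mm g q _
            _ ≤ mm g s := mm_le_of_mem_Pq g i hsP
        have h2 : (S.card : ℝ) * a ≤ ∑ s ∈ S, g s (y s) := by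
          have := Finset.card_nsmul_le_sum S (fun s => g s (y s)) a h1
          rwa [nsmul_eq_mul] at this
        have h3 : ∑ s ∈ S, g s (y s) ≤ ∑ s, g s (y s) :=
          Finset.sum_le_sum_of_subset_of_nonneg (Finset.subset_univ S)
            (fun s _ _ => (hpos s (y s)).le)
        calc (cc g i x q : ℝ) * a = (S.card : ℝ) * a := rfl
          _ ≤ ∑ s ∈ S, g s (y s) := h2
          _ ≤ ∑ s, g s (y s) := h3
      have hcapos : (0:ℝ) < (cc g i x q : ℝ) * a := by
        apply mul_pos _ hapos
        exact_mod_cast hc1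
      calc a / (∑ s, g s (y s)) ≤ a / ((cc g i x q : ℝ) * a) :=
            div_le_div_of_nonneg_left hapos.le hcapos hSsum
        _ = 1 / (cc g i x q : ℝ) := by
            rw [mul_comm, div_mul_eq_div_div, div_self (ne_of_gt hapos)]
        _ ≤ 8 / (nu g i q : ℝ) := by
            rw [div_le_div_iff₀ (by exact_mod_cast hc1) (by exact_mod_cast lt_of_lt_of_le ht hnut)]
            have : (nu g i q : ℝ) ≤ 8 * (cc g i x q : ℝ) := by exact_mod_cast h8c
            linarith
  calc ∑ q ∈ univ.erase i, g q (!(x q)) / (∑ s, g s (Function.update x q (!(x q)) s))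
      ≤ ∑ q ∈ univ.erase i, (if nu g i q < t₀ then (1:ℝ) else 8 / (nu g i q)) :=
        Finset.sum_le_sum hterm
    _ = ∑ k ∈ (univ.erase i).image (nu g i), (if k < t₀ then (1:ℝ) else 8 / k) := by
        rw [Finset.sum_image (fun q hq q' hq' h => nu_injOn g i hq hq' h)]
    _ ≤ ∑ k ∈ Finset.range n, (if k < t₀ then (1:ℝ) else 8 / k) := by
        apply Finset.sum_le_sum_of_subset_of_nonneg
        · intro k hk
          rcases Finset.mem_image.mp hk with ⟨q, hq, rfl⟩
          exact Finset.mem_range.mpr (nu_lt g i q hn1)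
        · intro k _ _
          split <;> positivity
    _ ≤ t₀ + 8 * (1 + Real.log n) := phi_sum n t₀ ht

lemma badcount {n : ℕ} (g : Fin n → Bool → ℝ) (i : Fin n) (t₀ : ℕ) :
    (((univ : Finset (Fin n → Bool)).filter (fun x => ¬ Good g i t₀ x)).card : ℝ)
      ≤ 5 * Real.exp (-(t₀:ℝ)/4) * 2 ^ n := by
  have hn1 : 1 ≤ n := i.pos
  set T := (univ.erase i).filter (fun q => t₀ ≤ nu g i q) with hT
  set B : Fin n → Finset (Fin n → Bool) :=
    fun q => (univ : Finset (Fin n → Bool)).filter (fun x => 8 * cc g i x q < nu g i q) with hB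
  have hsub : (univ : Finset (Fin n → Bool)).filter (fun x => ¬ Good g i t₀ x) ⊆ T.biUnion B := by
    intro x hx
    have hx' : ¬ Good g i t₀ x := (Finset.mem_filter.mp hx).2
    rw [Good] at hx'
    push_neg at hx'
    rcases hx' with ⟨q, hq, hq2⟩
    apply Finset.mem_biUnion.mpr
    refine ⟨q, ?_, ?_⟩
    · exact Finset.mem_filter.mpr ⟨hq, hq2.2⟩
    · exact Finset.mem_filter.mpr ⟨mem_univ x, hq2.1⟩
  have hcard : (((univ : Finset (Fin n → Bool)).filter (fun x => ¬ Good g i t₀ x)).card : ℝ)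
      ≤ ∑ q ∈ T, ((B q).card : ℝ) := by
    have h1 := Finset.card_le_card hsub
    have h2 := Finset.card_biUnion_le (s := T) (t := B)
    have := le_trans h1 h2
    exact_mod_cast this
  have hper : ∀ q ∈ T, ((B q).card : ℝ) ≤ Real.exp (-(nu g i q : ℝ)/4) * 2 ^ n := by
    intro q _
    exact chernoff_count (Pq g i q) (bb g)
  calc (((univ : Finset (Fin n → Bool)).filter (fun x => ¬ Good g i t₀ x)).card : ℝ)
      ≤ ∑ q ∈ T, ((B q).card : ℝ) := hcard
    _ ≤ ∑ q ∈ T, Real.exp (-(nu g i q : ℝ)/4) * 2 ^ n := Finset.sum_le_sum hper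
    _ = (∑ q ∈ T, Real.exp (-(nu g i q : ℝ)/4)) * 2 ^ n := by rw [Finset.sum_mul]
    _ ≤ (5 * Real.exp (-(t₀:ℝ)/4)) * 2 ^ n := by
        apply mul_le_mul_of_nonneg_right _ (by positivity)
        calc ∑ q ∈ T, Real.exp (-(nu g i q : ℝ)/4)
            = ∑ k ∈ T.image (nu g i), Real.exp (-(k : ℝ)/4) := by
              rw [Finset.sum_image]
              intro q hq q' hq' h
              exact nu_injOn g i (Finset.mem_of_mem_filter q hq) (Finset.mem_of_mem_filter q' hq') h
          _ ≤ ∑ k ∈ Finset.Ico t₀ n, Real.exp (-(k : ℝ)/4) := by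
              apply Finset.sum_le_sum_of_subset_of_nonneg
              · intro k hk
                rcases Finset.mem_image.mp hk with ⟨q, hq, rfl⟩
                rcases Finset.mem_filter.mp hq with ⟨hq1, hq2⟩
                exact Finset.mem_Ico.mpr ⟨hq2, nu_lt g i q hn1⟩
              · intro k _ _
                positivity
          _ ≤ 5 * Real.exp (-(t₀:ℝ)/4) := geom_tail t₀ n
    _ = 5 * Real.exp (-(t₀:ℝ)/4) * 2 ^ n := by ring

end


open SensTF

def ggA {d n : ℕ} (Kh Qh : Matrix (Fin d) (Fin d) ℝ) (e : Bool → Fin d → ℝ)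
    (p : Fin n → Fin d → ℝ) (i : Fin n) (b : Bool) (s : Fin n) (c : Bool) : ℝ :=
  Real.exp (dotProduct (Kh.mulVec (p s + e c)) (Qh.mulVec (p i + e b)))

lemma exp_logit {d n : ℕ} (Kh Qh : Matrix (Fin d) (Fin d) ℝ) (e : Bool → Fin d → ℝ)
    (p : Fin n → Fin d → ℝ) (i : Fin n) (z : Fin n → Bool) (s : Fin n) :
    Real.exp (attLogit Kh Qh (fun w => p w + e (z w)) i s) = ggA Kh Qh e p i (z i) s (z s) := rfl

lemma attWeight_eq {d n : ℕ} (Kh Qh : Matrix (Fin d) (Fin d) ℝ) (e : Bool → Fin d → ℝ)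
    (p : Fin n → Fin d → ℝ) (i : Fin n) (z : Fin n → Bool) (j : Fin n) :
    attWeight Kh Qh (fun w => p w + e (z w)) i j
      = ggA Kh Qh e p i (z i) j (z j) / ∑ s, ggA Kh Qh e p i (z i) s (z s) := rfl

lemma attWeight_nonneg {d n : ℕ} (K Q : Matrix (Fin d) (Fin d) ℝ)
    (yp : Fin n → Fin d → ℝ) (i u : Fin n) : 0 ≤ attWeight K Q yp i u := by
  unfold attWeight
  positivity

lemma sum_attWeight {d n : ℕ} (K Q : Matrix (Fin d) (Fin d) ℝ)
    (yp : Fin n → Fin d → ℝ) (i : Fin n) : ∑ u, attWeight K Q yp i u = 1 := by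
  unfold attWeight
  rw [← Finset.sum_div, div_self]
  apply ne_of_gt
  exact Finset.sum_pos (fun s _ => Real.exp_pos _) ⟨i, Finset.mem_univ i⟩


noncomputable section
open Classical

lemma detBound {d n : ℕ} (Kh Qh : Matrix (Fin d) (Fin d) ℝ) (e : Bool → Fin d → ℝ)
    (p : Fin n → Fin d → ℝ) (i : Fin n) (x : Fin n → Bool) (t₀ : ℕ) (ht : 1 ≤ t₀)
    (hgood : Good (ggA Kh Qh e p i (x i)) i t₀ x) :
    ∑ q, ∑ j, |attWeight Kh Qh (fun w => p w + e (x w)) i j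
        - attWeight Kh Qh (fun w => p w + e (flip x q w)) i j|
      ≤ 4 + 2 * (t₀ + 8 * (1 + Real.log n)) := by
  have hn1 : 1 ≤ n := i.pos
  set g := ggA Kh Qh e p i (x i) with hg
  have hpos : ∀ s c, 0 < g s c := fun s c => Real.exp_pos _
  have hawnn : ∀ (z : Fin n → Bool) (j : Fin n),
      0 ≤ attWeight Kh Qh (fun w => p w + e (z w)) i j := fun z j => attWeight_nonneg _ _ _ _ _
  have hawsum : ∀ (z : Fin n → Bool),
      ∑ j, attWeight Kh Qh (fun w => p w + e (z w)) i j = 1 := fun z => sum_attWeight _ _ _ _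
  -- the i-term
  have hi : ∑ j, |attWeight Kh Qh (fun w => p w + e (x w)) i j
      - attWeight Kh Qh (fun w => p w + e (flip x i w)) i j| ≤ 2 := by
    calc ∑ j, |attWeight Kh Qh (fun w => p w + e (x w)) i j
        - attWeight Kh Qh (fun w => p w + e (flip x i w)) i j|
        ≤ ∑ j, (attWeight Kh Qh (fun w => p w + e (x w)) i j
          + attWeight Kh Qh (fun w => p w + e (flip x i w)) i j) := by
          apply Finset.sum_le_sum
          intro j _
          calc |attWeight Kh Qh (fun w => p w + e (x w)) i j
              - attWeight Kh Qh (fun w => p w + e (flip x i w)) i j|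
              ≤ |attWeight Kh Qh (fun w => p w + e (x w)) i j|
                + |attWeight Kh Qh (fun w => p w + e (flip x i w)) i j| := abs_sub _ _
            _ = _ := by rw [abs_of_nonneg (hawnn _ _), abs_of_nonneg (hawnn _ _)]
      _ = 2 := by rw [Finset.sum_add_distrib, hawsum, hawsum]; norm_num
  -- terms q ≠ i
  have hq' : ∀ q ∈ Finset.univ.erase i,
      ∑ j, |attWeight Kh Qh (fun w => p w + e (x w)) i j
        - attWeight Kh Qh (fun w => p w + e (flip x q w)) i j|
      ≤ 2 * (attWeight Kh Qh (fun w => p w + e (x w)) i q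
          + attWeight Kh Qh (fun w => p w + e (flip x q w)) i q) := by
    intro q hq
    have hqi : q ≠ i := Finset.ne_of_mem_erase hq
    set w : Fin n → ℝ := fun s => Real.exp (attLogit Kh Qh (fun v => p v + e (x v)) i s) with hw
    set w' : Fin n → ℝ := fun s => Real.exp (attLogit Kh Qh (fun v => p v + e (flip x q v)) i s) with hw'
    have hag : ∀ s, s ≠ q → w' s = w s := by
      intro s hs
      have h1 : SensTF.flip x q s = x s := Function.update_of_ne hs _ x
      have h2 : SensTF.flip x q i = x i := Function.update_of_ne (Ne.symm hqi) _ x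
      rw [hw, hw']
      simp only [attLogit, h1, h2]
    exact softmax_l1 w w' (fun s => Real.exp_pos _) (fun s => Real.exp_pos _) q hag
  -- T bound
  have hT : ∑ q ∈ Finset.univ.erase i, attWeight Kh Qh (fun w => p w + e (flip x q w)) i q
      ≤ t₀ + 8 * (1 + Real.log n) := by
    have heq : ∀ q ∈ Finset.univ.erase i,
        attWeight Kh Qh (fun w => p w + e (flip x q w)) i q
          = g q (!(x q)) / (∑ s, g s (Function.update x q (!(x q)) s)) := by
      intro q hq
      have hqi : q ≠ i := Finset.ne_of_mem_erase hq
      rw [attWeight_eq]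
      have h1 : flip x q i = x i := Function.update_of_ne (Ne.symm hqi) _ x
      have h2 : flip x q q = !(x q) := Function.update_self _ _ _
      rw [h1, h2, hg]
      rfl
    rw [Finset.sum_congr rfl heq]
    exact Tbound g i hpos x t₀ ht hgood
  have hsub : ∑ q ∈ Finset.univ.erase i, attWeight Kh Qh (fun w => p w + e (x w)) i q ≤ 1 := by
    rw [← hawsum x]
    apply Finset.sum_le_sum_of_subset_of_nonneg (Finset.erase_subset _ _)
    intro q _ _
    exact hawnn x q
  rw [← Finset.sum_erase_add _ _ (Finset.mem_univ i)]
  have hmain : ∑ q ∈ Finset.univ.erase i, ∑ j, |attWeight Kh Qh (fun w => p w + e (x w)) i j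
        - attWeight Kh Qh (fun w => p w + e (flip x q w)) i j|
      ≤ 2 * 1 + 2 * (t₀ + 8 * (1 + Real.log n)) := by
    calc ∑ q ∈ Finset.univ.erase i, ∑ j, |attWeight Kh Qh (fun w => p w + e (x w)) i j
          - attWeight Kh Qh (fun w => p w + e (flip x q w)) i j|
        ≤ ∑ q ∈ Finset.univ.erase i, 2 * (attWeight Kh Qh (fun w => p w + e (x w)) i q
            + attWeight Kh Qh (fun w => p w + e (flip x q w)) i q) := Finset.sum_le_sum hq'
      _ = 2 * (∑ q ∈ Finset.univ.erase i, attWeight Kh Qh (fun w => p w + e (x w)) i q)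
          + 2 * (∑ q ∈ Finset.univ.erase i, attWeight Kh Qh (fun w => p w + e (flip x q w)) i q) := by
          rw [← mul_add, ← Finset.sum_add_distrib, Finset.mul_sum]
      _ ≤ 2 * 1 + 2 * (t₀ + 8 * (1 + Real.log n)) := by
          have h2 : (0:ℝ) ≤ 2 := by norm_num
          apply add_le_add
          · exact mul_le_mul_of_nonneg_left hsub h2
          · exact mul_le_mul_of_nonneg_left hT h2
  linarith

end

end SensAux

open SensAux Finset
set_option maxHeartbeats 1000000

/-- Lemma: first-layer attention weights have low total influence.
For first-layer attention over inputs `x ∈ {±1}ⁿ` (`n ≥ 2`), for every `δ > 0`, with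
probability at least `1 − H/n^{δ−2}` over a uniformly random `x`, simultaneously for all
positions `i` and heads `h`:
`∑_q ∑_j |â_{i,j}^{(h)}(x) − â_{i,j}^{(h)}(x^{⊕q})| ≤ (8+32δ)·log n + 10`,
independently of the norms of `K_h` and `Q_h`. -/
theorem statement10 {d H n : ℕ} (hn : 2 ≤ n)
    (e : Bool → Fin d → ℝ) (p : Fin n → Fin d → ℝ)
    (K Q : Fin H → Matrix (Fin d) (Fin d) ℝ)
    (δ : ℝ) (hδ : 0 < δ) :
    ((1 : ℝ) - H / (n : ℝ) ^ (δ - 2)) * 2 ^ n ≤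
      Nat.card {x : Fin n → Bool //
        ∀ (i : Fin n) (h : Fin H),
          ∑ q : Fin n, ∑ j : Fin n,
            |attWeight (K h) (Q h) (fun w => p w + e (x w)) i j -
              attWeight (K h) (Q h) (fun w => p w + e (flip x q w)) i j| ≤
            (8 + 32 * δ) * Real.log n + 10} := by
  classical
  have hn2 : (2:ℝ) ≤ (n:ℝ) := by exact_mod_cast hn
  have hn0 : (0:ℝ) < n := by linarith
  rcases le_or_gt ((1 : ℝ) - H / (n : ℝ) ^ (δ - 2)) 0 with htriv | htriv
  · have h2n : (0:ℝ) ≤ 2 ^ n := by positivity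
    calc ((1 : ℝ) - H / (n:ℝ) ^ (δ - 2)) * 2 ^ n ≤ 0 :=
          mul_nonpos_of_nonpos_of_nonneg htriv h2n
      _ ≤ _ := Nat.cast_nonneg _
  set P : (Fin n → Bool) → Prop := fun x => ∀ (i : Fin n) (h : Fin H),
      ∑ q : Fin n, ∑ j : Fin n,
        |attWeight (K h) (Q h) (fun w => p w + e (x w)) i j -
          attWeight (K h) (Q h) (fun w => p w + e (flip x q w)) i j| ≤
        (8 + 32 * δ) * Real.log n + 10 with hP
  have hNat : (Nat.card {x : Fin n → Bool // P x} : ℝ)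
      = ((Finset.univ.filter P).card : ℝ) := by
    rw [Nat.card_eq_fintype_card, Fintype.card_subtype]
  rw [hNat]
  have hsplitN : (Finset.univ.filter P).card + (Finset.univ.filter (fun x => ¬ P x)).card
      = 2 ^ n := by
    rw [Finset.card_filter_add_card_filter_not, Finset.card_univ, Fintype.card_fun]
    simp
  rcases Nat.eq_zero_or_pos H with hH0 | hH0
  · have hall : ∀ x : Fin n → Bool, P x := by
      intro x i h
      exact absurd h.isLt (by omega)
    have hfeq : Finset.univ.filter P = Finset.univ := by
      apply Finset.filter_true_of_mem
      intro x _
      exact hall x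
    rw [hfeq, Finset.card_univ, Fintype.card_fun]
    have hHr : (H:ℝ) = 0 := by exact_mod_cast hH0
    rw [hHr]
    simp
  -- main case : H ≥ 1
  have hH1 : (1:ℝ) ≤ H := by exact_mod_cast hH0
  have hrp : (0:ℝ) < (n:ℝ) ^ (δ - 2) := Real.rpow_pos_of_pos hn0 _
  have hlt : (H:ℝ) < (n:ℝ) ^ (δ - 2) := by
    have h1 : (H:ℝ) / (n:ℝ)^(δ-2) < 1 := by linarith
    calc (H:ℝ) = (H:ℝ)/(n:ℝ)^(δ-2) * (n:ℝ)^(δ-2) := by field_simp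
      _ < 1 * (n:ℝ)^(δ-2) := mul_lt_mul_of_pos_right h1 hrp
      _ = _ := one_mul _
  have h1n : (1:ℝ) < (n:ℝ) ^ (δ - 2) := lt_of_le_of_lt hH1 hlt
  have hδ2 : 2 < δ := by
    rcases (Real.one_lt_rpow_iff_of_pos hn0).mp h1n with ⟨-, h⟩ | ⟨h, -⟩
    · linarith
    · linarith
  have hlogn : Real.log 2 ≤ Real.log n := Real.log_le_log (by norm_num) hn2
  have hlog2l : (0.6931471803:ℝ) < Real.log 2 := Real.log_two_gt_d9
  have hlog2u : Real.log 2 < 0.6931471808 := Real.log_two_lt_d9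
  have hlognpos : 0 < Real.log n := by linarith
  have hlog10u : Real.log 10 ≤ 3 * Real.log 2 + 1/4 := by
    have h10 : (10:ℝ) = 8 * (5/4) := by norm_num
    rw [h10, Real.log_mul (by norm_num) (by norm_num)]
    have h8 : Real.log 8 = 3 * Real.log 2 := by
      have h83 : (8:ℝ) = 2 ^ (3:ℕ) := by norm_num
      rw [h83, Real.log_pow]
      push_cast
      ring
    have h54 : Real.log (5/4) ≤ 1/4 := by
      have := Real.log_le_sub_one_of_pos (show (0:ℝ) < 5/4 by norm_num)
      linarith
    linarith
  have hlog10l : 0 < Real.log 10 := Real.log_pos (by norm_num)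
  set A := 4*(δ-1)*Real.log n + 4*Real.log 10 with hA
  have hApos : 0 < A := by
    have hd1 : 0 < δ - 1 := by linarith
    have h1 := mul_pos (mul_pos (by norm_num : (0:ℝ)<4) hd1) hlognpos
    rw [hA]
    nlinarith
  set t₀ := ⌈A⌉₊ with ht₀def
  have ht₀1 : 1 ≤ t₀ := by
    rw [ht₀def]
    exact Nat.one_le_iff_ne_zero.mpr (by
      intro hcz
      have := Nat.ceil_eq_zero.mp hcz
      linarith)
  have ht₀l : A ≤ (t₀:ℝ) := Nat.le_ceil A
  have ht₀u : (t₀:ℝ) ≤ A + 1 := le_of_lt (Nat.ceil_lt_add_one hApos.le)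
  have hF5 : 4 + 2 * ((t₀:ℝ) + 8 * (1 + Real.log n)) ≤ (8 + 32*δ) * Real.log n + 10 := by
    have h48 : 48 * Real.log 2 ≤ 24 * (δ * Real.log n) := by nlinarith
    rw [hA] at ht₀u
    nlinarith
  have hF4 : 5 * Real.exp (-(t₀:ℝ)/4) ≤ (n:ℝ) ^ (1 - δ) / 2 := by
    have h1 : Real.exp (-(t₀:ℝ)/4) ≤ Real.exp (-((δ-1)*Real.log n + Real.log 10)) := by
      apply Real.exp_le_exp.mpr
      rw [hA] at ht₀l
      linarith
    have h2 : Real.exp (-((δ-1)*Real.log n + Real.log 10))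
        = (n:ℝ)^(1-δ) * (10:ℝ)⁻¹ := by
      rw [show -((δ-1)*Real.log n + Real.log 10)
          = (1-δ)*Real.log n + (-(Real.log 10)) by ring]
      rw [Real.exp_add, Real.exp_neg, Real.exp_log (by norm_num : (0:ℝ) < 10)]
      congr 1
      rw [Real.rpow_def_of_pos hn0, mul_comm]
    rw [h2] at h1
    have hrnn : (0:ℝ) ≤ (n:ℝ)^(1-δ) := (Real.rpow_pos_of_pos hn0 _).le
    linarith
  -- counting
  have hbadcount : ∀ t : Fin n × Fin H × Bool,
      ((Finset.univ.filter
        (fun x => ¬ Good (ggA (K t.2.1) (Q t.2.1) e p t.1 t.2.2) t.1 t₀ x)).card : ℝ)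
        ≤ (n:ℝ)^(1-δ)/2 * 2^n := by
    intro t
    calc ((Finset.univ.filter
        (fun x => ¬ Good (ggA (K t.2.1) (Q t.2.1) e p t.1 t.2.2) t.1 t₀ x)).card : ℝ)
        ≤ 5 * Real.exp (-(t₀:ℝ)/4) * 2^n := badcount _ _ _
      _ ≤ (n:ℝ)^(1-δ)/2 * 2^n := mul_le_mul_of_nonneg_right hF4 (by positivity)
  have hbad : ((Finset.univ.filter (fun x => ¬ P x)).card : ℝ)
      ≤ (H:ℝ) * (n:ℝ)^(2-δ) * 2^n := by
    have hsub : Finset.univ.filter (fun x => ¬ P x)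
        ⊆ (Finset.univ : Finset (Fin n × Fin H × Bool)).biUnion
          (fun t => Finset.univ.filter
            (fun x => ¬ Good (ggA (K t.2.1) (Q t.2.1) e p t.1 t.2.2) t.1 t₀ x)) := by
      intro x hx
      have hx' : ¬ P x := (Finset.mem_filter.mp hx).2
      simp only [hP] at hx'
      push_neg at hx'
      rcases hx' with ⟨i, h, hih⟩
      apply Finset.mem_biUnion.mpr
      refine ⟨(i, h, x i), Finset.mem_univ _, Finset.mem_filter.mpr ⟨Finset.mem_univ x, ?_⟩⟩
      intro hgood
      exact absurd (le_trans (detBound (K h) (Q h) e p i x t₀ ht₀1 hgood) hF5)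
        (not_le.mpr hih)
    have hc1 : ((Finset.univ.filter (fun x => ¬ P x)).card : ℝ)
        ≤ ∑ t : Fin n × Fin H × Bool, ((Finset.univ.filter
            (fun x => ¬ Good (ggA (K t.2.1) (Q t.2.1) e p t.1 t.2.2) t.1 t₀ x)).card : ℝ) := by
      have h1 := Finset.card_le_card hsub
      have h2 := Finset.card_biUnion_le (s := (Finset.univ : Finset (Fin n × Fin H × Bool)))
        (t := fun t => Finset.univ.filter
            (fun x => ¬ Good (ggA (K t.2.1) (Q t.2.1) e p t.1 t.2.2) t.1 t₀ x))
      exact_mod_cast le_trans h1 h2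
    have hc2 : ∑ t : Fin n × Fin H × Bool, ((Finset.univ.filter
            (fun x => ¬ Good (ggA (K t.2.1) (Q t.2.1) e p t.1 t.2.2) t.1 t₀ x)).card : ℝ)
        ≤ (Fintype.card (Fin n × Fin H × Bool) : ℝ) * ((n:ℝ)^(1-δ)/2 * 2^n) := by
      calc ∑ t : Fin n × Fin H × Bool, ((Finset.univ.filter
            (fun x => ¬ Good (ggA (K t.2.1) (Q t.2.1) e p t.1 t.2.2) t.1 t₀ x)).card : ℝ)
          ≤ ∑ _t : Fin n × Fin H × Bool, ((n:ℝ)^(1-δ)/2 * 2^n) :=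
            Finset.sum_le_sum (fun t _ => hbadcount t)
        _ = (Fintype.card (Fin n × Fin H × Bool) : ℝ) * ((n:ℝ)^(1-δ)/2 * 2^n) := by
            rw [Finset.sum_const, Finset.card_univ, nsmul_eq_mul]
    have hcard3 : (Fintype.card (Fin n × Fin H × Bool) : ℝ) = 2 * n * H := by
      simp [Fintype.card_prod]
      ring
    have hpow : (n:ℝ) * (n:ℝ)^(1-δ) = (n:ℝ)^(2-δ) := by
      calc (n:ℝ) * (n:ℝ)^(1-δ) = (n:ℝ)^(1:ℝ) * (n:ℝ)^(1-δ) := by rw [Real.rpow_one]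
        _ = (n:ℝ)^((1:ℝ)+(1-δ)) := (Real.rpow_add hn0 _ _).symm
        _ = (n:ℝ)^(2-δ) := by congr 1; ring
    calc ((Finset.univ.filter (fun x => ¬ P x)).card : ℝ)
        ≤ (Fintype.card (Fin n × Fin H × Bool) : ℝ) * ((n:ℝ)^(1-δ)/2 * 2^n) :=
          le_trans hc1 hc2
      _ = (H:ℝ) * ((n:ℝ) * (n:ℝ)^(1-δ)) * 2^n := by rw [hcard3]; ring
      _ = (H:ℝ) * (n:ℝ)^(2-δ) * 2^n := by rw [hpow]
  have hdiv : (H:ℝ) / (n:ℝ)^(δ-2) = (H:ℝ) * (n:ℝ)^(2-δ) := by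
    rw [div_eq_mul_inv, ← Real.rpow_neg hn0.le]
    norm_num
  have hsplitR : ((Finset.univ.filter P).card : ℝ)
      = 2^n - ((Finset.univ.filter (fun x => ¬ P x)).card : ℝ) := by
    have := hsplitN
    have h2 : ((Finset.univ.filter P).card : ℝ)
        + ((Finset.univ.filter (fun x => ¬ P x)).card : ℝ) = 2^n := by
      exact_mod_cast this
    linarith
  rw [hsplitR, hdiv]
  nlinarith [hbad]
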